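/- If z₁ and z₂ are distinct primitive integral vectors in ℤ³ with positive third coordinates satisfying Q(z₁) = Q(z₂) = 0 where Q(x₁,x₂,x₃) = x₁² + x₁x₂ + x₂² - x₃², then ⟨z₁, z₂⟩ ≤ -1/2, where ⟨x,y⟩ = x₁y₁ + (x₁y₂+x₂y₁)/2 + x₂y₂ - x₃y₃. -/

import Mathlib

theorem pairing_le_neg_half_of_primitive
    (a₁ b₁ c₁ a₂ b₂ c₂ : ℤ)
    (hprim₁ : Int.gcd (Int.gcd a₁ b₁) c₁ = 1)
    (hprim₂ : Int.gcd (Int.gcd a₂ b₂) c₂ = 1)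
    (hc₁ : 0 < c₁) (hc₂ : 0 < c₂)
    (hQ₁ : a₁ ^ 2 + a₁ * b₁ + b₁ ^ 2 - c₁ ^ 2 = 0)
    (hQ₂ : a₂ ^ 2 + a₂ * b₂ + b₂ ^ 2 - c₂ ^ 2 = 0)
    (hne : ¬(a₁ = a₂ ∧ b₁ = b₂ ∧ c₁ = c₂)) :
    (a₁ : ℝ) * a₂ + ((a₁ : ℝ) * b₂ + (a₂ : ℝ) * b₁) / 2 + (b₁ : ℝ) * b₂
        - (c₁ : ℝ) * c₂ ≤ -1 / 2 := by
  have key : (2*a₁*a₂ + a₁*b₂ + a₂*b₁ + 2*b₁*b₂)^2 + 3*(a₁*b₂ - a₂*b₁)^2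
      = 4*c₁^2*c₂^2 := by
    linear_combination (4*(a₂^2 + a₂*b₂ + b₂^2)) * hQ₁ + (4*c₁^2) * hQ₂
  have hTle : 2*a₁*a₂ + a₁*b₂ + a₂*b₁ + 2*b₁*b₂ ≤ 2*c₁*c₂ := by
    nlinarith [sq_nonneg (a₁*b₂ - a₂*b₁), mul_pos hc₁ hc₂,
      sq_nonneg (2*a₁*a₂ + a₁*b₂ + a₂*b₁ + 2*b₁*b₂ - 2*c₁*c₂)]
  have hfin : 2*a₁*a₂ + a₁*b₂ + a₂*b₁ + 2*b₁*b₂ + 1 ≤ 2*c₁*c₂ := by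
    rcases lt_or_eq_of_le hTle with h | hD
    · omega
    · -- equality case: derive a contradiction with hne
      exfalso
      have hsum : (2*(c₂*a₁ - c₁*a₂) + (c₂*b₁ - c₁*b₂))^2
          + 3*(c₂*b₁ - c₁*b₂)^2 = 0 := by
        linear_combination (4*c₂^2) * hQ₁ + (4*c₁^2) * hQ₂ - (4*c₁*c₂) * hD
      have hv : c₂*b₁ - c₁*b₂ = 0 := by
        nlinarith [sq_nonneg (2*(c₂*a₁ - c₁*a₂) + (c₂*b₁ - c₁*b₂)),
          sq_nonneg (c₂*b₁ - c₁*b₂)]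
      have hu : c₂*a₁ - c₁*a₂ = 0 := by
        nlinarith [sq_nonneg (2*(c₂*a₁ - c₁*a₂) + (c₂*b₁ - c₁*b₂)),
          sq_nonneg (c₂*b₁ - c₁*b₂)]
      have ha : c₂ * a₁ = c₁ * a₂ := by linarith
      have hb : c₂ * b₁ = c₁ * b₂ := by linarith
      have hd12 : c₁ ∣ c₂ := by
        have hga : c₁ ∣ c₂ * a₁ := ⟨a₂, ha⟩
        have hgb : c₁ ∣ c₂ * b₁ := ⟨b₂, hb⟩
        have hg : c₁ ∣ (Int.gcd (c₂*a₁) (c₂*b₁) : ℤ) := Int.dvd_coe_gcd hga hgb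
        rw [Int.gcd_mul_left] at hg
        push_cast at hg
        rw [abs_of_pos hc₂] at hg
        have hcop : IsCoprime ((Int.gcd a₁ b₁ : ℤ)) c₁ :=
          Int.isCoprime_iff_gcd_eq_one.mpr hprim₁
        exact hcop.symm.dvd_of_dvd_mul_right hg
      have hd21 : c₂ ∣ c₁ := by
        have hga : c₂ ∣ c₁ * a₂ := ⟨a₁, ha.symm⟩
        have hgb : c₂ ∣ c₁ * b₂ := ⟨b₁, hb.symm⟩
        have hg : c₂ ∣ (Int.gcd (c₁*a₂) (c₁*b₂) : ℤ) := Int.dvd_coe_gcd hga hgb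
        rw [Int.gcd_mul_left] at hg
        push_cast at hg
        rw [abs_of_pos hc₁] at hg
        have hcop : IsCoprime ((Int.gcd a₂ b₂ : ℤ)) c₂ :=
          Int.isCoprime_iff_gcd_eq_one.mpr hprim₂
        exact hcop.symm.dvd_of_dvd_mul_right hg
      have hcc : c₁ = c₂ :=
        le_antisymm (Int.le_of_dvd hc₂ hd12) (Int.le_of_dvd hc₁ hd21)
      subst hcc
      exact hne ⟨mul_left_cancel₀ hc₂.ne' ha, mul_left_cancel₀ hc₂.ne' hb, rfl⟩
  have hR : ((2*a₁*a₂ + a₁*b₂ + a₂*b₁ + 2*b₁*b₂ + 1 : ℤ) : ℝ)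
      ≤ ((2*c₁*c₂ : ℤ) : ℝ) := Int.cast_le.mpr hfin
  push_cast at hR
  linarith
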